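/- Let P : E → E be a linear map (not assumed continuous), and write P − z₀ for the map f ↦ P f − z₀ f. Suppose that (i) for every z ∈ U \ {z₀} and every f ∈ E one has both P(R(z)f) − z·(R(z)f) = f and R(z)(P f − z f) = f, and (ii) for every f ∈ E the map z ↦ P(H(z)f) is bounded on some neighborhood of z₀ in U. Then each Laurent coefficient commutes with P − z₀: for every 1 ≤ j ≤ k and every f ∈ E, A₋ⱼ(P f − z₀ f) = P(A₋ⱼ f) − z₀·(A₋ⱼ f). In particular A₋₁ commutes with P − z₀. -/
import Mathlib


open Filter Topology

/-- If a finite "principal part" `∑_{j=1}^m w^{-j} • c j` is eventually bounded near `0`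
(on the punctured neighborhood), all its coefficients vanish. -/
lemma aux_vanish {E : Type*} [NormedAddCommGroup E] [NormedSpace ℂ E] (c : ℕ → E) :
    ∀ m : ℕ, (∃ C : ℝ, ∀ᶠ w in 𝓝[≠] (0:ℂ),
        ‖∑ j ∈ Finset.Icc 1 m, w ^ (-(j:ℤ)) • c j‖ ≤ C) →
      ∀ j, 1 ≤ j → j ≤ m → c j = 0 := by
  intro m
  induction m with
  | zero => intro _ j h1 h2; omega
  | succ m ih =>
    rintro ⟨C, hC⟩
    have hcm : c (m+1) = 0 := by
      have hcont : ContinuousAt (fun w : ℂ => ∑ j ∈ Finset.Icc 1 (m+1), w ^ (m+1-j) • c j) 0 := by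
        apply Continuous.continuousAt
        exact continuous_finset_sum _ fun j _ => (continuous_pow _).smul continuous_const
      have hg0 : ∑ j ∈ Finset.Icc 1 (m+1), (0:ℂ) ^ (m+1-j) • c j = c (m+1) := by
        rw [Finset.sum_eq_single (m+1)]
        · simp
        · intro j hj hne
          simp only [Finset.mem_Icc] at hj
          rw [zero_pow (by omega)]
          simp
        · simp
      have h1 : Tendsto (fun w : ℂ => ∑ j ∈ Finset.Icc 1 (m+1), w ^ (m+1-j) • c j)
          (𝓝[≠] (0:ℂ)) (𝓝 (c (m+1))) := by
        have := hcont.tendsto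
        rw [hg0] at this
        exact this.mono_left nhdsWithin_le_nhds
      have h2 : Tendsto (fun w : ℂ => ∑ j ∈ Finset.Icc 1 (m+1), w ^ (m+1-j) • c j)
          (𝓝[≠] (0:ℂ)) (𝓝 0) := by
        have heq : ∀ᶠ w in 𝓝[≠] (0:ℂ),
            ‖∑ j ∈ Finset.Icc 1 (m+1), w ^ (m+1-j) • c j‖ ≤ ‖w‖^(m+1) * |C| := by
          filter_upwards [hC, self_mem_nhdsWithin] with w hw hw0
          have hw0' : (w:ℂ) ≠ 0 := hw0
          have hsw : ∑ j ∈ Finset.Icc 1 (m+1), w ^ (m+1-j) • c j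
              = w^(m+1) • ∑ j ∈ Finset.Icc 1 (m+1), w ^ (-(j:ℤ)) • c j := by
            rw [Finset.smul_sum]
            refine Finset.sum_congr rfl fun j hj => ?_
            simp only [Finset.mem_Icc] at hj
            rw [smul_smul, ← zpow_natCast w (m+1-j), ← zpow_natCast w (m+1),
              ← zpow_add₀ hw0']
            push_cast [Nat.cast_sub hj.2]
            ring_nf
          rw [hsw, norm_smul, norm_pow]
          have := le_trans hw (le_abs_self C)
          exact mul_le_mul_of_nonneg_left this (by positivity)
        have hlim : Tendsto (fun w : ℂ => ‖w‖^(m+1) * |C|) (𝓝[≠] 0) (𝓝 0) := by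
          have h : Tendsto (fun w : ℂ => ‖w‖^(m+1) * |C|) (𝓝 0)
              (𝓝 (‖(0:ℂ)‖^(m+1) * |C|)) := ((continuous_norm.pow (m+1)).mul continuous_const).tendsto 0
          simpa using h.mono_left nhdsWithin_le_nhds
        exact squeeze_zero_norm' heq hlim
      exact tendsto_nhds_unique h1 h2
    intro j hj1 hj2
    rcases eq_or_lt_of_le hj2 with h | h
    · rw [h]; exact hcm
    · refine ih ⟨C, ?_⟩ j hj1 (by omega)
      filter_upwards [hC] with w hw
      have : ∑ j ∈ Finset.Icc 1 (m+1), w ^ (-(j:ℤ)) • c j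
          = ∑ j ∈ Finset.Icc 1 m, w ^ (-(j:ℤ)) • c j := by
        rw [Finset.sum_Icc_succ_top (by omega : 1 ≤ m + 1), hcm, smul_zero, add_zero]
      rwa [this] at hw

/-- the Laurent coefficients of a meromorphically continued resolvent at a
resonance `z₀` commute with `P - z₀` (Banach-space abstraction of Proposition 2.2). -/
theorem stmt_1
    {E : Type*} [NormedAddCommGroup E] [NormedSpace ℂ E] [CompleteSpace E]
    (z₀ : ℂ) (k : ℕ) (hk : 1 ≤ k)
    (U : Set ℂ) (hU : IsOpen U) (hz₀ : z₀ ∈ U)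
    (A : ℕ → (E →L[ℂ] E)) (H : ℂ → (E →L[ℂ] E))
    (hH : AnalyticOnNhd ℂ H U)
    (R : ℂ → (E →L[ℂ] E))
    (hR : ∀ z ∈ U \ {z₀},
      R z = (∑ j ∈ Finset.Icc 1 k, (z - z₀) ^ (-(j : ℤ)) • A j) + H z)
    (P : E →ₗ[ℂ] E)
    (hres : ∀ z ∈ U \ {z₀}, ∀ f : E,
      P (R z f) - z • R z f = f ∧ R z (P f - z • f) = f)
    (hbdd : ∀ f : E, ∃ V ∈ 𝓝 z₀, ∃ C : ℝ, ∀ z ∈ V ∩ U, ‖P (H z f)‖ ≤ C) :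
    ∀ j : ℕ, 1 ≤ j → j ≤ k → ∀ f : E,
      A j (P f - z₀ • f) = P (A j f) - z₀ • A j f := by
  intro j hj1 hjk f
  set Bf : E := P f - z₀ • f with hBf
  set c : ℕ → E := fun i => A i Bf - (P (A i f) - z₀ • A i f) with hc
  suffices h : ∀ i, 1 ≤ i → i ≤ k → c i = 0 by
    have := h j hj1 hjk
    rw [hc] at this
    simpa [sub_eq_zero] using this
  -- the key algebraic identity on the punctured neighborhood
  have key : ∀ z ∈ U \ {z₀},
      ∑ i ∈ Finset.Icc 1 k, (z - z₀) ^ (-(i:ℤ)) • c i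
        = P (H z f) - z₀ • H z f - H z Bf := by
    intro z hz
    obtain ⟨h1, h2⟩ := hres z hz f
    have hRe : ∀ x : E, R z x
        = ∑ i ∈ Finset.Icc 1 k, (z - z₀) ^ (-(i:ℤ)) • A i x + H z x := by
      intro x
      rw [hR z hz]
      simp [ContinuousLinearMap.sum_apply]
    -- R z Bf = P (R z f) - z₀ • R z f
    have e0 : R z Bf = P (R z f) - z₀ • R z f := by
      have ha : R z Bf = f + (z - z₀) • R z f := by
        have hpf : P f - z • f = Bf - (z - z₀) • f := by rw [hBf]; module
        rw [hpf, map_sub, map_smul] at h2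
        exact eq_add_of_sub_eq h2
      have hb : P (R z f) - z₀ • R z f = f + (z - z₀) • R z f := by
        calc P (R z f) - z₀ • R z f
            = (P (R z f) - z • R z f) + (z - z₀) • R z f := by module
          _ = f + (z - z₀) • R z f := by rw [h1]
      rw [ha, hb]
    -- expand e0
    rw [hRe Bf, hRe f, map_add, map_sum, smul_add, Finset.smul_sum] at e0
    simp only [map_smul] at e0
    rw [← sub_eq_zero] at e0 ⊢
    rw [← e0]
    simp only [hc, smul_sub, Finset.sum_sub_distrib]
    simp only [smul_smul, mul_comm]
    abel
  -- boundedness near z₀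
  obtain ⟨V, hV, C, hCb⟩ := hbdd f
  have hHc : ContinuousAt H z₀ := (hH z₀ hz₀).continuousAt
  have hM : ∀ᶠ z in 𝓝 z₀, ‖H z‖ < ‖H z₀‖ + 1 :=
    hHc.norm.eventually_lt_const (lt_add_one _)
  set D : ℝ := C + ‖z₀‖ * ((‖H z₀‖ + 1) * ‖f‖) + (‖H z₀‖ + 1) * ‖Bf‖ with hD
  have hbound : ∀ᶠ z in 𝓝[≠] z₀,
      ‖∑ i ∈ Finset.Icc 1 k, (z - z₀) ^ (-(i:ℤ)) • c i‖ ≤ D := by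
    filter_upwards [mem_nhdsWithin_of_mem_nhds hV,
      mem_nhdsWithin_of_mem_nhds (hU.mem_nhds hz₀),
      mem_nhdsWithin_of_mem_nhds hM, self_mem_nhdsWithin] with z hzV hzU hzM hzne
    have hzmem : z ∈ U \ {z₀} := ⟨hzU, hzne⟩
    rw [key z hzmem]
    have hb1 : ‖P (H z f)‖ ≤ C := hCb z ⟨hzV, hzU⟩
    have hb2 : ‖H z f‖ ≤ (‖H z₀‖ + 1) * ‖f‖ :=
      le_trans ((H z).le_opNorm f)
        (mul_le_mul_of_nonneg_right hzM.le (norm_nonneg f))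
    have hb3 : ‖H z Bf‖ ≤ (‖H z₀‖ + 1) * ‖Bf‖ :=
      le_trans ((H z).le_opNorm Bf)
        (mul_le_mul_of_nonneg_right hzM.le (norm_nonneg Bf))
    calc ‖P (H z f) - z₀ • H z f - H z Bf‖
        ≤ ‖P (H z f) - z₀ • H z f‖ + ‖H z Bf‖ := norm_sub_le _ _
      _ ≤ (‖P (H z f)‖ + ‖z₀ • H z f‖) + ‖H z Bf‖ := by
          gcongr; exact norm_sub_le _ _
      _ = ‖P (H z f)‖ + ‖z₀‖ * ‖H z f‖ + ‖H z Bf‖ := by rw [norm_smul]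
      _ ≤ C + ‖z₀‖ * ((‖H z₀‖ + 1) * ‖f‖) + (‖H z₀‖ + 1) * ‖Bf‖ := by
          gcongr
      _ = D := hD.symm
  -- transfer to the punctured neighborhood of 0
  have hmap : Tendsto (fun w : ℂ => z₀ + w) (𝓝[≠] (0:ℂ)) (𝓝[≠] z₀) := by
    rw [tendsto_nhdsWithin_iff]
    constructor
    · have : Tendsto (fun w : ℂ => z₀ + w) (𝓝 0) (𝓝 (z₀ + 0)) :=
        (continuous_const.add continuous_id).tendsto 0
      simpa using this.mono_left nhdsWithin_le_nhds
    · filter_upwards [self_mem_nhdsWithin] with w hw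
      simpa using hw
  refine aux_vanish c k ⟨D, ?_⟩
  filter_upwards [hmap.eventually hbound] with w hw
  simpa using hw
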